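/- The supremum over x > 0 of the function x ↦ cos x - 1 + x²/2 divided by x³ is attained and equals θ₀⁻³(cos θ₀ - 1 + θ₀²/2), where θ₀ is the unique root in [π, 2π] of θ² + 2θ sin θ + 6(cos θ - 1) = 0; in particular sup_{x>0} x⁻³|cos x - 1 + x²/2| < 0.0992. -/

import Mathlib

open Real

noncomputable def hh (t : ℝ) : ℝ := t^2 + 2*(t*Real.sin t) + 6*(Real.cos t - 1)
noncomputable def Gf (x : ℝ) : ℝ := (Real.cos x - 1 + x^2/2) / x^3
noncomputable def Pf (t : ℝ) : ℝ := (t - Real.sin t)/(3*t^2)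

lemma sinc : ∀ u : ℝ, 0 ≤ u → u ≤ π → u * Real.cos u ≤ Real.sin u := by
  have hmono : MonotoneOn (fun y : ℝ => Real.sin y - y * Real.cos y) (Set.Icc 0 π) := by
    have hd : ∀ y : ℝ, HasDerivAt (fun y : ℝ => Real.sin y - y * Real.cos y)
        (y * Real.sin y) y := by
      intro y
      have h1 := (Real.hasDerivAt_sin y).sub ((hasDerivAt_id' y).mul (Real.hasDerivAt_cos y))
      refine h1.congr_deriv ?_; ring
    apply monotoneOn_of_deriv_nonneg (convex_Icc 0 π)
    · exact fun y _ => (hd y).continuousAt.continuousWithinAt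
    · intro y hy
      exact (hd y).differentiableAt.differentiableWithinAt
    · intro y hy
      rw [interior_Icc] at hy
      rw [(hd y).deriv]
      exact mul_nonneg hy.1.le (Real.sin_nonneg_of_nonneg_of_le_pi hy.1.le hy.2.le)
  intro u h0 h1
  have := hmono (Set.left_mem_Icc.mpr Real.pi_pos.le) ⟨h0, h1⟩ h0
  simp at this
  linarith

lemma hh_deriv (t : ℝ) : HasDerivAt hh (2*t*(1+Real.cos t) - 4*Real.sin t) t := by
  have h1 := ((hasDerivAt_pow 2 t).add
      (((hasDerivAt_id' t).mul (Real.hasDerivAt_sin t)).const_mul 2)).add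
      (((Real.hasDerivAt_cos t).sub_const 1).const_mul 6)
  have h2 : HasDerivAt hh ((↑2 * t^1 + 2*(1 * Real.sin t + t * Real.cos t)) + 6 * (-Real.sin t)) t := h1
  convert h2 using 1; ring

lemma hh_zero : hh 0 = 0 := by simp [hh]

lemma hh_anti : AntitoneOn hh (Set.Icc 0 π) := by
  apply antitoneOn_of_deriv_nonpos (convex_Icc 0 π)
  · exact fun y _ => (hh_deriv y).continuousAt.continuousWithinAt
  · exact fun y _ => (hh_deriv y).differentiableAt.differentiableWithinAt
  · intro t ht
    rw [interior_Icc] at ht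
    rw [(hh_deriv t).deriv]
    have h2 : 2*(t/2) = t := by ring
    have hc2 : Real.cos t = 2 * Real.cos (t/2)^2 - 1 := by
      have := Real.cos_two_mul (t/2); rwa [h2] at this
    have hs2 : Real.sin t = 2 * Real.sin (t/2) * Real.cos (t/2) := by
      have := Real.sin_two_mul (t/2); rwa [h2] at this
    have hcn : 0 ≤ Real.cos (t/2) :=
      Real.cos_nonneg_of_mem_Icc ⟨by nlinarith [Real.pi_pos, ht.1], by linarith [ht.2]⟩
    have hsc := sinc (t/2) (by linarith [ht.1]) (by linarith [ht.2, Real.pi_pos])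
    rw [hc2, hs2]
    nlinarith [mul_nonneg hcn (sub_nonneg.mpr hsc), ht.1]

lemma hh_mono : MonotoneOn hh (Set.Icc π (2*π)) := by
  apply monotoneOn_of_deriv_nonneg (convex_Icc π (2*π))
  · exact fun y _ => (hh_deriv y).continuousAt.continuousWithinAt
  · exact fun y _ => (hh_deriv y).differentiableAt.differentiableWithinAt
  · intro t ht
    rw [interior_Icc] at ht
    rw [(hh_deriv t).deriv]
    have hs : Real.sin t ≤ 0 := by
      rw [← Real.sin_sub_two_pi t]
      exact Real.sin_nonpos_of_nonpos_of_neg_pi_le (by linarith [ht.2]) (by linarith [ht.1, Real.pi_pos])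
    have hc := Real.neg_one_le_cos t
    have htp : 0 < t := lt_trans Real.pi_pos ht.1
    nlinarith [mul_nonneg htp.le (by linarith : (0:ℝ) ≤ 1 + Real.cos t)]

lemma Gf_deriv (x : ℝ) (hx : x ≠ 0) :
    HasDerivAt Gf (((x - Real.sin x) * x^3 - (Real.cos x - 1 + x^2/2) * (3*x^2)) / (x^3)^2) x := by
  have hnum : HasDerivAt (fun y : ℝ => Real.cos y - 1 + y^2/2) (x - Real.sin x) x := by
    have h1 := ((Real.hasDerivAt_cos x).sub_const 1).add ((hasDerivAt_pow 2 x).div_const 2)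
    refine h1.congr_deriv ?_; push_cast; ring
  have hden : HasDerivAt (fun y : ℝ => y^3) (3*x^2) x := by
    have := hasDerivAt_pow 3 x; refine this.congr_deriv ?_; norm_num
  have h := hnum.div hden (pow_ne_zero 3 hx)
  exact h

lemma Pf_deriv (t : ℝ) (ht : t ≠ 0) :
    HasDerivAt Pf (((1 - Real.cos t)*(3*t^2) - (t - Real.sin t)*(3*(2*t)))/(3*t^2)^2) t := by
  have hnum : HasDerivAt (fun y : ℝ => y - Real.sin y) (1 - Real.cos t) t :=
    (hasDerivAt_id' t).sub (Real.hasDerivAt_sin t)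
  have hden : HasDerivAt (fun y : ℝ => 3*y^2) (3*(2*t)) t := by
    have := (hasDerivAt_pow 2 t).const_mul (3:ℝ); refine this.congr_deriv ?_; push_cast; ring
  exact hnum.div hden (by positivity)

lemma Pf_anti : AntitoneOn Pf (Set.Icc π (2*π)) := by
  apply antitoneOn_of_deriv_nonpos (convex_Icc π (2*π))
  · intro y hy
    exact (Pf_deriv y (by have := Real.pi_pos; intro h; rw [h] at hy; exact absurd hy.1 (by linarith))).continuousAt.continuousWithinAt
  · intro y hy
    rw [interior_Icc] at hy
    have : y ≠ 0 := by have := Real.pi_pos; linarith [hy.1]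
    exact (Pf_deriv y this).differentiableAt.differentiableWithinAt
  · intro t ht
    rw [interior_Icc] at ht
    have htp : 0 < t := lt_trans Real.pi_pos ht.1
    rw [(Pf_deriv t htp.ne').deriv]
    apply div_nonpos_of_nonpos_of_nonneg _ (by positivity)
    have hs : Real.sin t ≤ 0 := by
      rw [← Real.sin_sub_two_pi t]
      exact Real.sin_nonpos_of_nonpos_of_neg_pi_le (by linarith [ht.2]) (by linarith [ht.1, Real.pi_pos])
    have hc := Real.neg_one_le_cos t
    nlinarith [mul_nonneg htp.le (neg_nonneg.mpr hs),
      mul_nonneg (mul_nonneg htp.le htp.le) (by linarith : (0:ℝ) ≤ 1 + Real.cos t)]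


lemma key (f g : ℝ → ℝ) (h0 : f 0 = 0)
    (hd : ∀ x, HasDerivAt f (g x) x) (hg : ∀ x, 0 ≤ x → 0 ≤ g x) :
    ∀ x, 0 ≤ x → 0 ≤ f x := by
  intro x hx
  have hmono : MonotoneOn f (Set.Ici (0:ℝ)) := by
    apply monotoneOn_of_deriv_nonneg (convex_Ici 0)
    · exact fun y _ => (hd y).continuousAt.continuousWithinAt
    · exact fun y _ => (hd y).differentiableAt.differentiableWithinAt
    · intro y hy
      rw [interior_Ici] at hy
      rw [(hd y).deriv]
      exact hg y hy.le
  have h2 := hmono Set.self_mem_Ici (Set.mem_Ici.mpr hx) hx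
  linarith

lemma sin_ub_1 : ∀ x : ℝ, 0 ≤ x → Real.sin x ≤ x := fun _ hx => Real.sin_le hx

lemma cos_lb_2 : ∀ x : ℝ, 0 ≤ x → 1 - x^2/2 ≤ Real.cos x := by
  have h := key (fun y => Real.cos y - (1 - y^2/2))
      (fun y => (y) - Real.sin y)
      (by norm_num)
      (fun x => by
        have h1 := (Real.hasDerivAt_cos x).sub ((hasDerivAt_const x (1:ℝ)).sub ((hasDerivAt_pow 2 x).div_const 2))
        refine h1.congr_deriv ?_
        push_cast; ring)
      (fun x hx => by have := sin_ub_1 x hx; linarith)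
  intro x hx; have := h x hx; linarith

lemma sin_lb_3 : ∀ x : ℝ, 0 ≤ x → x - x^3/6 ≤ Real.sin x := by
  have h := key (fun y => Real.sin y - (y - y^3/6))
      (fun y => Real.cos y - (1 - y^2/2))
      (by norm_num)
      (fun x => by
        have h1 := (Real.hasDerivAt_sin x).sub ((hasDerivAt_id x).sub ((hasDerivAt_pow 3 x).div_const 6))
        refine h1.congr_deriv ?_
        push_cast; ring)
      (fun x hx => by have := cos_lb_2 x hx; linarith)
  intro x hx; have := h x hx; linarith

lemma cos_ub_4 : ∀ x : ℝ, 0 ≤ x → Real.cos x ≤ 1 - x^2/2 + x^4/24 := by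
  have h := key (fun y => (1 - y^2/2 + y^4/24) - Real.cos y)
      (fun y => -(y - y^3/6) + Real.sin y)
      (by norm_num)
      (fun x => by
        have h1 := (((hasDerivAt_const x (1:ℝ)).sub ((hasDerivAt_pow 2 x).div_const 2)).add ((hasDerivAt_pow 4 x).div_const 24)).sub (Real.hasDerivAt_cos x)
        refine h1.congr_deriv ?_
        push_cast; ring)
      (fun x hx => by have := sin_lb_3 x hx; linarith)
  intro x hx; have := h x hx; linarith

lemma sin_ub_5 : ∀ x : ℝ, 0 ≤ x → Real.sin x ≤ x - x^3/6 + x^5/120 := by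
  have h := key (fun y => (y - y^3/6 + y^5/120) - Real.sin y)
      (fun y => (1 - y^2/2 + y^4/24) - Real.cos y)
      (by norm_num)
      (fun x => by
        have h1 := (((hasDerivAt_id x).sub ((hasDerivAt_pow 3 x).div_const 6)).add ((hasDerivAt_pow 5 x).div_const 120)).sub (Real.hasDerivAt_sin x)
        refine h1.congr_deriv ?_
        push_cast; ring)
      (fun x hx => by have := cos_ub_4 x hx; linarith)
  intro x hx; have := h x hx; linarith

lemma cos_lb_6 : ∀ x : ℝ, 0 ≤ x → 1 - x^2/2 + x^4/24 - x^6/720 ≤ Real.cos x := by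
  have h := key (fun y => Real.cos y - (1 - y^2/2 + y^4/24 - y^6/720))
      (fun y => (y - y^3/6 + y^5/120) - Real.sin y)
      (by norm_num)
      (fun x => by
        have h1 := (Real.hasDerivAt_cos x).sub ((((hasDerivAt_const x (1:ℝ)).sub ((hasDerivAt_pow 2 x).div_const 2)).add ((hasDerivAt_pow 4 x).div_const 24)).sub ((hasDerivAt_pow 6 x).div_const 720))
        refine h1.congr_deriv ?_
        push_cast; ring)
      (fun x hx => by have := sin_ub_5 x hx; linarith)
  intro x hx; have := h x hx; linarith

lemma sin_lb_7 : ∀ x : ℝ, 0 ≤ x → x - x^3/6 + x^5/120 - x^7/5040 ≤ Real.sin x := by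
  have h := key (fun y => Real.sin y - (y - y^3/6 + y^5/120 - y^7/5040))
      (fun y => Real.cos y - (1 - y^2/2 + y^4/24 - y^6/720))
      (by norm_num)
      (fun x => by
        have h1 := (Real.hasDerivAt_sin x).sub ((((hasDerivAt_id x).sub ((hasDerivAt_pow 3 x).div_const 6)).add ((hasDerivAt_pow 5 x).div_const 120)).sub ((hasDerivAt_pow 7 x).div_const 5040))
        refine h1.congr_deriv ?_
        push_cast; ring)
      (fun x hx => by have := cos_lb_6 x hx; linarith)
  intro x hx; have := h x hx; linarith

lemma cos_ub_8 : ∀ x : ℝ, 0 ≤ x → Real.cos x ≤ 1 - x^2/2 + x^4/24 - x^6/720 + x^8/40320 := by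
  have h := key (fun y => (1 - y^2/2 + y^4/24 - y^6/720 + y^8/40320) - Real.cos y)
      (fun y => -(y - y^3/6 + y^5/120 - y^7/5040) + Real.sin y)
      (by norm_num)
      (fun x => by
        have h1 := (((((hasDerivAt_const x (1:ℝ)).sub ((hasDerivAt_pow 2 x).div_const 2)).add ((hasDerivAt_pow 4 x).div_const 24)).sub ((hasDerivAt_pow 6 x).div_const 720)).add ((hasDerivAt_pow 8 x).div_const 40320)).sub (Real.hasDerivAt_cos x)
        refine h1.congr_deriv ?_
        push_cast; ring)
      (fun x hx => by have := sin_lb_7 x hx; linarith)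
  intro x hx; have := h x hx; linarith

lemma sin_ub_9 : ∀ x : ℝ, 0 ≤ x → Real.sin x ≤ x - x^3/6 + x^5/120 - x^7/5040 + x^9/362880 := by
  have h := key (fun y => (y - y^3/6 + y^5/120 - y^7/5040 + y^9/362880) - Real.sin y)
      (fun y => (1 - y^2/2 + y^4/24 - y^6/720 + y^8/40320) - Real.cos y)
      (by norm_num)
      (fun x => by
        have h1 := (((((hasDerivAt_id x).sub ((hasDerivAt_pow 3 x).div_const 6)).add ((hasDerivAt_pow 5 x).div_const 120)).sub ((hasDerivAt_pow 7 x).div_const 5040)).add ((hasDerivAt_pow 9 x).div_const 362880)).sub (Real.hasDerivAt_sin x)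
        refine h1.congr_deriv ?_
        push_cast; ring)
      (fun x hx => by have := cos_ub_8 x hx; linarith)
  intro x hx; have := h x hx; linarith

lemma cos_lb_10 : ∀ x : ℝ, 0 ≤ x → 1 - x^2/2 + x^4/24 - x^6/720 + x^8/40320 - x^10/3628800 ≤ Real.cos x := by
  have h := key (fun y => Real.cos y - (1 - y^2/2 + y^4/24 - y^6/720 + y^8/40320 - y^10/3628800))
      (fun y => (y - y^3/6 + y^5/120 - y^7/5040 + y^9/362880) - Real.sin y)
      (by norm_num)
      (fun x => by
        have h1 := (Real.hasDerivAt_cos x).sub ((((((hasDerivAt_const x (1:ℝ)).sub ((hasDerivAt_pow 2 x).div_const 2)).add ((hasDerivAt_pow 4 x).div_const 24)).sub ((hasDerivAt_pow 6 x).div_const 720)).add ((hasDerivAt_pow 8 x).div_const 40320)).sub ((hasDerivAt_pow 10 x).div_const 3628800))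
        refine h1.congr_deriv ?_
        push_cast; ring)
      (fun x hx => by have := sin_ub_9 x hx; linarith)
  intro x hx; have := h x hx; linarith

lemma sin_lb_11 : ∀ x : ℝ, 0 ≤ x → x - x^3/6 + x^5/120 - x^7/5040 + x^9/362880 - x^11/39916800 ≤ Real.sin x := by
  have h := key (fun y => Real.sin y - (y - y^3/6 + y^5/120 - y^7/5040 + y^9/362880 - y^11/39916800))
      (fun y => Real.cos y - (1 - y^2/2 + y^4/24 - y^6/720 + y^8/40320 - y^10/3628800))
      (by norm_num)
      (fun x => by
        have h1 := (Real.hasDerivAt_sin x).sub ((((((hasDerivAt_id x).sub ((hasDerivAt_pow 3 x).div_const 6)).add ((hasDerivAt_pow 5 x).div_const 120)).sub ((hasDerivAt_pow 7 x).div_const 5040)).add ((hasDerivAt_pow 9 x).div_const 362880)).sub ((hasDerivAt_pow 11 x).div_const 39916800))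
        refine h1.congr_deriv ?_
        push_cast; ring)
      (fun x hx => by have := cos_lb_10 x hx; linarith)
  intro x hx; have := h x hx; linarith

lemma cos_ub_12 : ∀ x : ℝ, 0 ≤ x → Real.cos x ≤ 1 - x^2/2 + x^4/24 - x^6/720 + x^8/40320 - x^10/3628800 + x^12/479001600 := by
  have h := key (fun y => (1 - y^2/2 + y^4/24 - y^6/720 + y^8/40320 - y^10/3628800 + y^12/479001600) - Real.cos y)
      (fun y => -(y - y^3/6 + y^5/120 - y^7/5040 + y^9/362880 - y^11/39916800) + Real.sin y)
      (by norm_num)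
      (fun x => by
        have h1 := (((((((hasDerivAt_const x (1:ℝ)).sub ((hasDerivAt_pow 2 x).div_const 2)).add ((hasDerivAt_pow 4 x).div_const 24)).sub ((hasDerivAt_pow 6 x).div_const 720)).add ((hasDerivAt_pow 8 x).div_const 40320)).sub ((hasDerivAt_pow 10 x).div_const 3628800)).add ((hasDerivAt_pow 12 x).div_const 479001600)).sub (Real.hasDerivAt_cos x)
        refine h1.congr_deriv ?_
        push_cast; ring)
      (fun x hx => by have := sin_lb_11 x hx; linarith)
  intro x hx; have := h x hx; linarith

lemma sin_ub_13 : ∀ x : ℝ, 0 ≤ x → Real.sin x ≤ x - x^3/6 + x^5/120 - x^7/5040 + x^9/362880 - x^11/39916800 + x^13/6227020800 := by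
  have h := key (fun y => (y - y^3/6 + y^5/120 - y^7/5040 + y^9/362880 - y^11/39916800 + y^13/6227020800) - Real.sin y)
      (fun y => (1 - y^2/2 + y^4/24 - y^6/720 + y^8/40320 - y^10/3628800 + y^12/479001600) - Real.cos y)
      (by norm_num)
      (fun x => by
        have h1 := (((((((hasDerivAt_id x).sub ((hasDerivAt_pow 3 x).div_const 6)).add ((hasDerivAt_pow 5 x).div_const 120)).sub ((hasDerivAt_pow 7 x).div_const 5040)).add ((hasDerivAt_pow 9 x).div_const 362880)).sub ((hasDerivAt_pow 11 x).div_const 39916800)).add ((hasDerivAt_pow 13 x).div_const 6227020800)).sub (Real.hasDerivAt_sin x)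
        refine h1.congr_deriv ?_
        push_cast; ring)
      (fun x hx => by have := cos_ub_12 x hx; linarith)
  intro x hx; have := h x hx; linarith

lemma cos_lb_14 : ∀ x : ℝ, 0 ≤ x → 1 - x^2/2 + x^4/24 - x^6/720 + x^8/40320 - x^10/3628800 + x^12/479001600 - x^14/87178291200 ≤ Real.cos x := by
  have h := key (fun y => Real.cos y - (1 - y^2/2 + y^4/24 - y^6/720 + y^8/40320 - y^10/3628800 + y^12/479001600 - y^14/87178291200))
      (fun y => (y - y^3/6 + y^5/120 - y^7/5040 + y^9/362880 - y^11/39916800 + y^13/6227020800) - Real.sin y)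
      (by norm_num)
      (fun x => by
        have h1 := (Real.hasDerivAt_cos x).sub ((((((((hasDerivAt_const x (1:ℝ)).sub ((hasDerivAt_pow 2 x).div_const 2)).add ((hasDerivAt_pow 4 x).div_const 24)).sub ((hasDerivAt_pow 6 x).div_const 720)).add ((hasDerivAt_pow 8 x).div_const 40320)).sub ((hasDerivAt_pow 10 x).div_const 3628800)).add ((hasDerivAt_pow 12 x).div_const 479001600)).sub ((hasDerivAt_pow 14 x).div_const 87178291200))
        refine h1.congr_deriv ?_
        push_cast; ring)
      (fun x hx => by have := sin_ub_13 x hx; linarith)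
  intro x hx; have := h x hx; linarith

lemma sin_lb_15 : ∀ x : ℝ, 0 ≤ x → x - x^3/6 + x^5/120 - x^7/5040 + x^9/362880 - x^11/39916800 + x^13/6227020800 - x^15/1307674368000 ≤ Real.sin x := by
  have h := key (fun y => Real.sin y - (y - y^3/6 + y^5/120 - y^7/5040 + y^9/362880 - y^11/39916800 + y^13/6227020800 - y^15/1307674368000))
      (fun y => Real.cos y - (1 - y^2/2 + y^4/24 - y^6/720 + y^8/40320 - y^10/3628800 + y^12/479001600 - y^14/87178291200))
      (by norm_num)
      (fun x => by
        have h1 := (Real.hasDerivAt_sin x).sub ((((((((hasDerivAt_id x).sub ((hasDerivAt_pow 3 x).div_const 6)).add ((hasDerivAt_pow 5 x).div_const 120)).sub ((hasDerivAt_pow 7 x).div_const 5040)).add ((hasDerivAt_pow 9 x).div_const 362880)).sub ((hasDerivAt_pow 11 x).div_const 39916800)).add ((hasDerivAt_pow 13 x).div_const 6227020800)).sub ((hasDerivAt_pow 15 x).div_const 1307674368000))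
        refine h1.congr_deriv ?_
        push_cast; ring)
      (fun x hx => by have := cos_lb_14 x hx; linarith)
  intro x hx; have := h x hx; linarith

lemma cos_ub_16 : ∀ x : ℝ, 0 ≤ x → Real.cos x ≤ 1 - x^2/2 + x^4/24 - x^6/720 + x^8/40320 - x^10/3628800 + x^12/479001600 - x^14/87178291200 + x^16/20922789888000 := by
  have h := key (fun y => (1 - y^2/2 + y^4/24 - y^6/720 + y^8/40320 - y^10/3628800 + y^12/479001600 - y^14/87178291200 + y^16/20922789888000) - Real.cos y)
      (fun y => -(y - y^3/6 + y^5/120 - y^7/5040 + y^9/362880 - y^11/39916800 + y^13/6227020800 - y^15/1307674368000) + Real.sin y)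
      (by norm_num)
      (fun x => by
        have h1 := (((((((((hasDerivAt_const x (1:ℝ)).sub ((hasDerivAt_pow 2 x).div_const 2)).add ((hasDerivAt_pow 4 x).div_const 24)).sub ((hasDerivAt_pow 6 x).div_const 720)).add ((hasDerivAt_pow 8 x).div_const 40320)).sub ((hasDerivAt_pow 10 x).div_const 3628800)).add ((hasDerivAt_pow 12 x).div_const 479001600)).sub ((hasDerivAt_pow 14 x).div_const 87178291200)).add ((hasDerivAt_pow 16 x).div_const 20922789888000)).sub (Real.hasDerivAt_cos x)
        refine h1.congr_deriv ?_
        push_cast; ring)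
      (fun x hx => by have := sin_lb_15 x hx; linarith)
  intro x hx; have := h x hx; linarith

lemma sin_ub_17 : ∀ x : ℝ, 0 ≤ x → Real.sin x ≤ x - x^3/6 + x^5/120 - x^7/5040 + x^9/362880 - x^11/39916800 + x^13/6227020800 - x^15/1307674368000 + x^17/355687428096000 := by
  have h := key (fun y => (y - y^3/6 + y^5/120 - y^7/5040 + y^9/362880 - y^11/39916800 + y^13/6227020800 - y^15/1307674368000 + y^17/355687428096000) - Real.sin y)
      (fun y => (1 - y^2/2 + y^4/24 - y^6/720 + y^8/40320 - y^10/3628800 + y^12/479001600 - y^14/87178291200 + y^16/20922789888000) - Real.cos y)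
      (by norm_num)
      (fun x => by
        have h1 := (((((((((hasDerivAt_id x).sub ((hasDerivAt_pow 3 x).div_const 6)).add ((hasDerivAt_pow 5 x).div_const 120)).sub ((hasDerivAt_pow 7 x).div_const 5040)).add ((hasDerivAt_pow 9 x).div_const 362880)).sub ((hasDerivAt_pow 11 x).div_const 39916800)).add ((hasDerivAt_pow 13 x).div_const 6227020800)).sub ((hasDerivAt_pow 15 x).div_const 1307674368000)).add ((hasDerivAt_pow 17 x).div_const 355687428096000)).sub (Real.hasDerivAt_sin x)
        refine h1.congr_deriv ?_
        push_cast; ring)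
      (fun x hx => by have := cos_ub_16 x hx; linarith)
  intro x hx; have := h x hx; linarith
theorem stmt_1 (θ₀ : ℝ)
    (hθ : θ₀ ∈ Set.Icc π (2 * π))
    (hroot : θ₀ ^ 2 + 2 * θ₀ * Real.sin θ₀ + 6 * (Real.cos θ₀ - 1) = 0)
    (huniq : ∀ θ ∈ Set.Icc π (2 * π),
      θ ^ 2 + 2 * θ * Real.sin θ + 6 * (Real.cos θ - 1) = 0 → θ = θ₀) :
    IsGreatest {y : ℝ | ∃ x > 0, y = x⁻¹ ^ 3 * |Real.cos x - 1 + x ^ 2 / 2|}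
        (θ₀⁻¹ ^ 3 * (Real.cos θ₀ - 1 + θ₀ ^ 2 / 2)) ∧
      θ₀⁻¹ ^ 3 * (Real.cos θ₀ - 1 + θ₀ ^ 2 / 2) < 0.0992 := by
  have pipos := Real.pi_pos
  obtain ⟨hθ1, hθ2⟩ := hθ
  have θpos : 0 < θ₀ := lt_of_lt_of_le pipos hθ1
  have hhθ : hh θ₀ = 0 := by simp only [hh]; linear_combination hroot
  have quad : ∀ x : ℝ, 0 ≤ x → 0 ≤ Real.cos x - 1 + x ^ 2 / 2 := by
    intro x hx; have := cos_lb_2 x hx; linarith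
  have hval : ∀ x : ℝ, x⁻¹ ^ 3 * (Real.cos x - 1 + x ^ 2 / 2) = Gf x := by
    intro x; rw [inv_pow, inv_mul_eq_div]; rfl
  -- sign of hh
  have hneg : ∀ x : ℝ, 0 < x → x < θ₀ → hh x ≤ 0 := by
    intro x hx hxθ
    rcases le_total x π with hxπ | hπx
    · have h := hh_anti (Set.left_mem_Icc.mpr pipos.le) ⟨hx.le, hxπ⟩ hx.le
      rw [hh_zero] at h; exact h
    · have h := hh_mono ⟨hπx, by linarith⟩ ⟨hθ1, hθ2⟩ hxθ.le
      rw [hhθ] at h; exact h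
  have hpos : ∀ x : ℝ, θ₀ ≤ x → x ≤ 2 * π → 0 ≤ hh x := by
    intro x h1 h2
    have h := hh_mono ⟨hθ1, hθ2⟩ ⟨by linarith, h2⟩ h1
    rw [hhθ] at h; exact h
  -- monotonicity of Gf
  have hGmono : MonotoneOn Gf (Set.Ioc 0 θ₀) := by
    apply monotoneOn_of_deriv_nonneg (convex_Ioc 0 θ₀)
    · exact fun y hy => (Gf_deriv y (ne_of_gt hy.1)).continuousAt.continuousWithinAt
    · intro y hy
      rw [interior_Ioc] at hy
      exact (Gf_deriv y (ne_of_gt hy.1)).differentiableAt.differentiableWithinAt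
    · intro y hy
      rw [interior_Ioc] at hy
      rw [(Gf_deriv y (ne_of_gt hy.1)).deriv]
      apply div_nonneg _ (by positivity)
      have hhy := hneg y hy.1 hy.2
      have heq : (y - Real.sin y) * y ^ 3 - (Real.cos y - 1 + y ^ 2 / 2) * (3 * y ^ 2)
          = y ^ 2 * (-(hh y) / 2) := by simp only [hh]; ring
      rw [heq]
      exact mul_nonneg (sq_nonneg y) (by linarith)
  have hGanti : AntitoneOn Gf (Set.Icc θ₀ (2 * π)) := by
    apply antitoneOn_of_deriv_nonpos (convex_Icc θ₀ (2 * π))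
    · exact fun y hy => (Gf_deriv y (by linarith [hy.1] : y ≠ 0)).continuousAt.continuousWithinAt
    · intro y hy
      rw [interior_Icc] at hy
      exact (Gf_deriv y (by linarith [hy.1] : y ≠ 0)).differentiableAt.differentiableWithinAt
    · intro y hy
      rw [interior_Icc] at hy
      have hy0 : 0 < y := lt_trans θpos hy.1
      rw [(Gf_deriv y hy0.ne').deriv]
      apply div_nonpos_of_nonpos_of_nonneg _ (by positivity)
      have hhy := hpos y hy.1.le hy.2.le
      have heq : (y - Real.sin y) * y ^ 3 - (Real.cos y - 1 + y ^ 2 / 2) * (3 * y ^ 2)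
          = y ^ 2 * (-(hh y) / 2) := by simp only [hh]; ring
      rw [heq]
      exact mul_nonpos_of_nonneg_of_nonpos (sq_nonneg y) (by linarith)
  -- main comparison
  have main : ∀ x : ℝ, 0 < x → Gf x ≤ Gf θ₀ := by
    intro x hx
    rcases le_total x θ₀ with h1 | h1
    · exact hGmono ⟨hx, h1⟩ ⟨θpos, le_refl _⟩ h1
    rcases le_total x (2 * π) with h2 | h2
    · exact hGanti ⟨le_refl _, hθ2⟩ ⟨h1, h2⟩ h1
    · have hx3 : (0:ℝ) < x ^ 3 := by positivity
      have hGx : Gf x ≤ 1 / (2 * x) := by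
        have hc : Real.cos x - 1 + x ^ 2 / 2 ≤ x ^ 2 / 2 := by linarith [Real.cos_le_one x]
        have e1 : Gf x ≤ x ^ 2 / 2 / x ^ 3 := by
          simp only [Gf]; gcongr
        have e2 : x ^ 2 / 2 / x ^ 3 = 1 / (2 * x) := by
          field_simp
        linarith
      have h2x : 1 / (2 * x) ≤ 1 / (4 * π) := by
        apply one_div_le_one_div_of_le (by positivity) (by linarith)
      have hπG : 1 / (4 * π) ≤ Gf π := by
        simp only [Gf, Real.cos_pi]
        rw [div_le_div_iff₀ (by positivity) (by positivity)]
        nlinarith [Real.pi_gt_three]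
      have hπθ : Gf π ≤ Gf θ₀ := hGmono ⟨pipos, hθ1⟩ ⟨θpos, le_refl _⟩ hθ1
      linarith
  -- numeric bounds
  have hLθ : (3.995 : ℝ) ≤ θ₀ := by
    by_contra hcon
    push_neg at hcon
    have hLmem : (3.995 : ℝ) ∈ Set.Icc π (2 * π) :=
      ⟨by linarith [Real.pi_lt_d4], by linarith [Real.pi_gt_d4]⟩
    have h := hh_mono ⟨hθ1, hθ2⟩ hLmem hcon.le
    rw [hhθ] at h
    have hs := sin_ub_17 3.995 (by norm_num)
    have hc := cos_ub_16 3.995 (by norm_num)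
    simp only [hh] at h
    norm_num at hs hc h
    linarith
  have hPθL : Pf θ₀ ≤ Pf 3.995 :=
    Pf_anti ⟨by linarith [Real.pi_lt_d4], by linarith [Real.pi_gt_d4]⟩ ⟨hθ1, hθ2⟩ hLθ
  have hGP : Gf θ₀ = Pf θ₀ := by
    simp only [Gf, Pf]
    rw [div_eq_div_iff (by positivity) (by positivity)]
    linear_combination (θ₀ ^ 2 / 2) * hroot
  have hPL : Pf 3.995 < 0.0992 := by
    have hs := sin_lb_15 3.995 (by norm_num)
    simp only [Pf]
    rw [div_lt_iff₀ (by norm_num)]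
    norm_num at hs ⊢
    linarith
  have hfin : Gf θ₀ < 0.0992 := by rw [hGP]; linarith
  refine ⟨⟨⟨θ₀, θpos, ?_⟩, ?_⟩, ?_⟩
  · rw [abs_of_nonneg (quad θ₀ θpos.le)]
  · rintro y ⟨x, hx, rfl⟩
    rw [abs_of_nonneg (quad x hx.le), hval x, hval θ₀]
    exact main x hx
  · rw [hval θ₀]; exact hfin
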